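/- Let d ≥ 1 be an integer, let 0 < r_min ≤ r_max, and set I = [r_min, r_max]. Let T > 0 and let k : ℝ → ℝ be a bounded integrable function with k(−u) = k(u) for all u, k(u) = 0 whenever |u| > T, and ∫_ℝ k(u) du = 1. Let g₀ : ℝ → ℝ be twice continuously differentiable on the open half-line (0, ∞). Then there exist b₀ > 0 and M ≥ 0 such that for every b ∈ (0, b₀] and every r ∈ I, |∫_0^∞ (t/r)^{d−1} · b^{−1} k((r−t)/b) · g₀(t) dt − g₀(r)| ≤ M · b². -/

import Mathlib

open MeasureTheory

section KernelBiasAux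
open Set

/-- Odd function integrates to zero (via symmetry of the kernel). -/
lemma oddKernel_integral_zero (k : ℝ → ℝ) (hk_even : ∀ u, k (-u) = k u) :
    (∫ u, u * k u) = 0 := by
  have h1 : (∫ u : ℝ, (fun x : ℝ => x * k x) (-u)) = ∫ u : ℝ, u * k u :=
    integral_neg_eq_self (fun x : ℝ => x * k x) volume
  simp only [hk_even, neg_mul] at h1
  rw [integral_neg] at h1
  linarith

/-- Quadratic Taylor-type bound obtained by two applications of the mean value inequality. -/
lemma taylor_quad_bound {φ : ℝ → ℝ} {U : Set ℝ} (hU : IsOpen U) {J : Set ℝ}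
    (hJU : J ⊆ U) (hJconv : Convex ℝ J)
    (hφ : ContDiffOn ℝ 2 φ U) {C : ℝ}
    (hC : ∀ x ∈ J, |deriv (deriv φ) x| ≤ C) :
    ∀ r ∈ J, ∀ s ∈ J, |φ s - φ r - deriv φ r * (s - r)| ≤ C * (s - r) ^ 2 := by
  have h2 : ContDiffOn ℝ (1 + 1) φ U := by
    convert hφ using 2; exact one_add_one_eq_two
  rw [contDiffOn_succ_iff_deriv_of_isOpen hU] at h2
  obtain ⟨hφdiff, -, hdφ⟩ := h2
  have h1 : ContDiffOn ℝ (0 + 1) (deriv φ) U := by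
    rw [zero_add]; exact hdφ
  rw [contDiffOn_succ_iff_deriv_of_isOpen hU] at h1
  obtain ⟨hdφdiff, -, -⟩ := h1
  -- Lipschitz bound on deriv φ over J
  have hLip : ∀ x ∈ J, ∀ y ∈ J, |deriv φ y - deriv φ x| ≤ C * |y - x| := by
    intro x hx y hy
    have hder : ∀ z ∈ J, HasDerivWithinAt (deriv φ) (deriv (deriv φ) z) J z :=
      fun z hz => ((hdφdiff.differentiableAt (hU.mem_nhds (hJU hz))).hasDerivAt).hasDerivWithinAt
    have := Convex.norm_image_sub_le_of_norm_hasDerivWithin_le hder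
      (fun z hz => by simpa [Real.norm_eq_abs] using hC z hz) hJconv hx hy
    simpa [Real.norm_eq_abs] using this
  intro r hr s hs
  set ψ : ℝ → ℝ := fun x => φ x - deriv φ r * x with hψdef
  have hKJ : uIcc r s ⊆ J := hJconv.ordConnected.uIcc_subset hr hs
  have hderψ : ∀ x ∈ uIcc r s,
      HasDerivWithinAt ψ (deriv φ x - deriv φ r) (uIcc r s) x := by
    intro x hx
    have hx1 : HasDerivAt φ (deriv φ x) x :=
      (hφdiff.differentiableAt (hU.mem_nhds (hJU (hKJ hx)))).hasDerivAt
    have hx2 : HasDerivAt (fun y : ℝ => deriv φ r * y) (deriv φ r) x := by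
      simpa using (hasDerivAt_id x).const_mul (deriv φ r)
    exact (hx1.sub hx2).hasDerivWithinAt
  have hbound : ∀ x ∈ uIcc r s, ‖deriv φ x - deriv φ r‖ ≤ C * |s - r| := by
    intro x hx
    have h1 : |deriv φ x - deriv φ r| ≤ C * |x - r| := hLip r hr x (hKJ hx)
    have h2 : |x - r| ≤ |s - r| := abs_sub_left_of_mem_uIcc hx
    have hC0 : 0 ≤ C := le_trans (abs_nonneg _) (hC r hr)
    calc ‖deriv φ x - deriv φ r‖ = |deriv φ x - deriv φ r| := rfl
      _ ≤ C * |x - r| := h1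
      _ ≤ C * |s - r| := mul_le_mul_of_nonneg_left h2 hC0
  have := Convex.norm_image_sub_le_of_norm_hasDerivWithin_le hderψ hbound
    (convex_uIcc r s) (left_mem_uIcc) (right_mem_uIcc)
  have heq : ψ s - ψ r = φ s - φ r - deriv φ r * (s - r) := by simp [hψdef]; ring
  rw [heq, Real.norm_eq_abs, Real.norm_eq_abs] at this
  calc |φ s - φ r - deriv φ r * (s - r)| ≤ C * |s - r| * |s - r| := this
    _ = C * (s - r) ^ 2 := by rw [mul_assoc, abs_mul_abs_self, sq]

end KernelBiasAux

open Set in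
set_option maxHeartbeats 1000000 in
/-- Lemma 5.2 (analytic content): uniform `O(b²)` bias bound for the polar-coordinates
kernel-smoothed integral of a `C²` function `g₀` over a compact interval `I = [r_min, r_max]`
of the positive half-line. -/
theorem kernel_estimator_bias_uniform (d : ℕ) (hd : 1 ≤ d)
    (rmin rmax : ℝ) (h0 : 0 < rmin) (hrr : rmin ≤ rmax)
    (T : ℝ) (hT : 0 < T) (k : ℝ → ℝ)
    (hk_int : Integrable k)
    (hk_bdd : ∃ B : ℝ, ∀ u, |k u| ≤ B)
    (hk_even : ∀ u, k (-u) = k u)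
    (hk_supp : ∀ u : ℝ, T < |u| → k u = 0)
    (hk_one : (∫ u, k u) = 1)
    (g₀ : ℝ → ℝ) (hg : ContDiffOn ℝ 2 g₀ (Set.Ioi 0)) :
    ∃ b₀ > (0 : ℝ), ∃ M ≥ (0 : ℝ), ∀ b : ℝ, 0 < b → b ≤ b₀ →
      ∀ r ∈ Set.Icc rmin rmax,
        |(∫ t in Set.Ioi (0 : ℝ), (t / r) ^ (d - 1) * (b⁻¹ * k ((r - t) / b)) * g₀ t) - g₀ r|
          ≤ M * b ^ 2 := by
  set p : ℕ := d - 1 with hp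
  set c : ℝ := rmin / 4 with hcdef
  have hc : 0 < c := by positivity
  set b₀ : ℝ := c / T with hb₀def
  have hb₀ : 0 < b₀ := by positivity
  -- the modified (globally continuous) versions of g₀
  set g₁ : ℝ → ℝ := fun t => g₀ (max t c) with hg₁def
  have hg₁cont : Continuous g₁ :=
    hg.continuousOn.comp_continuous (continuous_id.max continuous_const)
      (fun x => lt_of_lt_of_le hc (le_max_right x c))
  have hg₁eq : ∀ t : ℝ, c < t → g₁ t = g₀ t := by
    intro t ht; simp [hg₁def, max_eq_left ht.le]
  set φ : ℝ → ℝ := fun t => t ^ p * g₁ t with hφdef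
  have hφcont : Continuous φ := (continuous_pow p).mul hg₁cont
  have hsub : Ioi c ⊆ Ioi (0 : ℝ) := fun x hx => lt_trans hc hx
  have hg₁C2 : ContDiffOn ℝ 2 g₁ (Ioi c) :=
    (hg.mono hsub).congr (fun t ht => hg₁eq t ht)
  have hφC2 : ContDiffOn ℝ 2 φ (Ioi c) :=
    ((contDiff_id.pow p).contDiffOn).mul hg₁C2
  -- the compact interval J
  set J : Set ℝ := Icc (3 * c) (rmax + c) with hJdef
  have hc4 : 4 * c = rmin := by rw [hcdef]; ring
  have hJne : 3 * c ≤ rmax + c := by linarith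
  have hJU : J ⊆ Ioi c := fun x hx => lt_of_lt_of_le (by linarith) hx.1
  -- bound on φ over J
  obtain ⟨D, hD⟩ := (isCompact_Icc (a := 3 * c) (b := rmax + c)).exists_bound_of_continuousOn
    hφcont.continuousOn
  have hD0 : 0 ≤ D := le_trans (norm_nonneg _) (hD (3 * c) ⟨le_refl _, hJne⟩)
  -- bound on the second derivative of φ over J
  have hddcont : ContinuousOn (deriv (deriv φ)) (Ioi c) := by
    have h2 : ContDiffOn ℝ (1 + 1) φ (Ioi c) := by convert hφC2 using 2; exact one_add_one_eq_two
    rw [contDiffOn_succ_iff_deriv_of_isOpen isOpen_Ioi] at h2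
    have h1 : ContDiffOn ℝ (0 + 1) (deriv φ) (Ioi c) := by rw [zero_add]; exact h2.2.2
    rw [contDiffOn_succ_iff_deriv_of_isOpen isOpen_Ioi] at h1
    exact (contDiffOn_zero.mp h1.2.2)
  obtain ⟨C, hC⟩ := (isCompact_Icc (a := 3 * c) (b := rmax + c)).exists_bound_of_continuousOn
    (hddcont.mono hJU)
  have hC0 : 0 ≤ C := le_trans (norm_nonneg _) (hC (3 * c) ⟨le_refl _, hJne⟩)
  have htaylor := taylor_quad_bound isOpen_Ioi hJU (convex_Icc _ _) hφC2
    (fun x hx => by simpa [Real.norm_eq_abs] using hC x hx)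
  -- the odd moment vanishes
  have hodd : (∫ u, u * k u) = 0 := oddKernel_integral_zero k hk_even
  -- define M
  refine ⟨b₀, hb₀, (rmin ^ p)⁻¹ * (C * T ^ 2 * ∫ u, |k u|), by positivity, ?_⟩
  intro b hb hbb₀ r hr
  have hr0 : 0 < r := lt_of_lt_of_le h0 hr.1
  have hrp : (0 : ℝ) < r ^ p := pow_pos hr0 p
  have hb' : b ≠ 0 := ne_of_gt hb
  have hrJ : r ∈ J := ⟨by linarith [hr.1], by linarith [hr.2]⟩
  have hbT : b * T ≤ c := by
    have : b ≤ c / T := hbb₀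
    calc b * T ≤ (c / T) * T := mul_le_mul_of_nonneg_right this hT.le
      _ = c := by field_simp
  have hmem : ∀ u : ℝ, |u| ≤ T → r - b * u ∈ J := by
    intro u hu
    have h1 : |b * u| ≤ c := by
      rw [abs_mul, abs_of_pos hb]
      calc b * |u| ≤ b * T := mul_le_mul_of_nonneg_left hu hb.le
        _ ≤ c := hbT
    have h2 := abs_le.mp h1
    exact ⟨by linarith [hr.1, h2.2], by linarith [hr.2, h2.1]⟩
  -- the kernel vanishes when the argument t is ≤ c
  have hker0 : ∀ t : ℝ, t ≤ c → k ((r - t) / b) = 0 := by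
    intro t ht
    apply hk_supp
    have h1 : T * b < r - t := by
      have h2 : T * b ≤ c := by linarith [hbT, mul_comm b T]
      have h3 : 3 * c ≤ r - t := by linarith [hr.1]
      linarith
    have h4 : T < (r - t) / b := (lt_div_iff₀ hb).mpr h1
    exact lt_of_lt_of_le h4 (le_abs_self _)
  -- Step 1: replace g₀ by g₁ and extend the integral to all of ℝ
  have hstep1 : (∫ t in Set.Ioi (0 : ℝ), (t / r) ^ p * (b⁻¹ * k ((r - t) / b)) * g₀ t)
      = ∫ t : ℝ, (t / r) ^ p * (b⁻¹ * k ((r - t) / b)) * g₁ t := by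
    rw [setIntegral_congr_fun (f := fun t => (t / r) ^ p * (b⁻¹ * k ((r - t) / b)) * g₀ t)
      (g := fun t => (t / r) ^ p * (b⁻¹ * k ((r - t) / b)) * g₁ t) measurableSet_Ioi ?_]
    · exact setIntegral_eq_integral_of_forall_compl_eq_zero (fun t ht => by
        have ht' : t ≤ 0 := le_of_not_gt (by simpa using ht)
        rw [hker0 t (le_trans ht' hc.le)]; ring)
    · intro t ht
      rcases le_or_gt t c with h | h
      · simp only [hker0 t h]; ring
      · simp only [hg₁eq t h]
  -- Step 2: change of variables t = r - b u
  set G : ℝ → ℝ := fun u => ((r - b * u) / r) ^ p * k u * g₁ (r - b * u) with hGdef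
  have hfun : ∀ t : ℝ, (t / r) ^ p * (b⁻¹ * k ((r - t) / b)) * g₁ t = b⁻¹ * G ((r - t) / b) := by
    intro t
    have ht : r - b * ((r - t) / b) = t := by field_simp; ring
    simp only [hGdef, ht]; ring
  have hstep2 : (∫ t : ℝ, (t / r) ^ p * (b⁻¹ * k ((r - t) / b)) * g₁ t) = ∫ u, G u := by
    simp_rw [hfun]
    rw [integral_const_mul]
    have h1 : (∫ t : ℝ, G ((r - t) / b)) = ∫ x : ℝ, G (x / b) :=
      integral_sub_left_eq_self (fun x : ℝ => G (x / b)) volume r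
    have h2 : (∫ x : ℝ, G (x / b)) = |b| • ∫ u, G u := Measure.integral_comp_div G b
    rw [h1, h2, abs_of_pos hb, smul_eq_mul]
    field_simp
  -- Step 3: pull out the factor r^(-p)
  have hstep3 : (∫ u, G u) = (r ^ p)⁻¹ * ∫ u, k u * φ (r - b * u) := by
    have : ∀ u : ℝ, G u = (r ^ p)⁻¹ * (k u * φ (r - b * u)) := by
      intro u
      simp only [hGdef, hφdef, div_pow]
      field_simp
    simp_rw [this]
    rw [integral_const_mul]
  -- Integrability facts
  have hkm : AEStronglyMeasurable k volume := hk_int.1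
  have hsm : AEStronglyMeasurable (fun u : ℝ => φ (r - b * u)) volume :=
    (hφcont.comp (continuous_const.sub (continuous_const.mul continuous_id))).aestronglyMeasurable
  have hI1 : Integrable (fun u : ℝ => k u * φ (r - b * u)) := by
    refine Integrable.mono' (hk_int.abs.const_mul D) ?_ ?_
    · exact hkm.mul hsm
    filter_upwards with u
    rcases le_or_gt (|u|) T with h | h
    · rw [Real.norm_eq_abs, abs_mul]
      calc |k u| * |φ (r - b * u)| ≤ |k u| * D :=
            mul_le_mul_of_nonneg_left (by simpa [Real.norm_eq_abs] using hD _ (hmem u h))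
              (abs_nonneg _)
        _ = D * |k u| := mul_comm _ _
    · simp [hk_supp u h, mul_nonneg hD0 (abs_nonneg (k u))]
  have hI3 : Integrable (fun u : ℝ => u * k u) := by
    refine Integrable.mono' (hk_int.abs.const_mul T) ?_ ?_
    · exact continuous_id.aestronglyMeasurable.mul hkm
    filter_upwards with u
    rcases le_or_gt (|u|) T with h | h
    · rw [Real.norm_eq_abs, abs_mul]
      calc |u| * |k u| ≤ T * |k u| := mul_le_mul_of_nonneg_right h (abs_nonneg _)
        _ = T * |k u| := rfl
    · simp [hk_supp u h, mul_nonneg hT.le (abs_nonneg (k u))]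
  -- Step 4: key decomposition
  set E : ℝ → ℝ := fun u => φ (r - b * u) - φ r - deriv φ r * (-(b * u)) with hEdef
  have hIc : Integrable (fun u : ℝ => φ r * k u) := hk_int.const_mul (φ r)
  have hI12 : Integrable (fun u : ℝ => k u * φ (r - b * u) - φ r * k u) := hI1.sub hIc
  have hI3' : Integrable (fun u : ℝ => -(b * deriv φ r) * (u * k u)) := hI3.const_mul _
  have heqE : (fun u : ℝ => k u * E u)
      = fun u => (k u * φ (r - b * u) - φ r * k u) - (-(b * deriv φ r)) * (u * k u) := by
    funext u; simp only [hEdef]; ring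
  have hIE : Integrable (fun u : ℝ => k u * E u) := by
    rw [heqE]; exact hI12.sub hI3'
  have hstep4 : (∫ u, k u * φ (r - b * u)) - φ r = ∫ u, k u * E u := by
    have h1 : (∫ u, φ r * k u) = φ r := by
      rw [integral_const_mul, hk_one, mul_one]
    have h2 : (∫ u, (-(b * deriv φ r)) * (u * k u)) = 0 := by
      rw [integral_const_mul, hodd, mul_zero]
    rw [heqE, integral_sub hI12 hI3', integral_sub hI1 hIc, h2, h1]
    ring
  -- Step 5: bound the remainder integral
  have hbound : |∫ u, k u * E u| ≤ C * T ^ 2 * (∫ u, |k u|) * b ^ 2 := by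
    have hpt : ∀ u : ℝ, |k u * E u| ≤ (C * T ^ 2 * b ^ 2) * |k u| := by
      intro u
      rcases le_or_gt (|u|) T with h | h
      · have hs : r - b * u ∈ J := hmem u h
        have htb := htaylor r hrJ (r - b * u) hs
        have hsr : r - b * u - r = -(b * u) := by ring
        rw [hsr] at htb
        have hE : |E u| ≤ C * T ^ 2 * b ^ 2 := by
          have h1 : |E u| ≤ C * (-(b * u)) ^ 2 := htb
          have h2 : (-(b * u)) ^ 2 = b ^ 2 * u ^ 2 := by ring
          have h3 : u ^ 2 ≤ T ^ 2 := by
            calc u ^ 2 = |u| ^ 2 := (sq_abs u).symm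
              _ ≤ T ^ 2 := pow_le_pow_left₀ (abs_nonneg u) h 2
          calc |E u| ≤ C * (b ^ 2 * u ^ 2) := by rw [← h2]; exact h1
            _ ≤ C * (b ^ 2 * T ^ 2) :=
                mul_le_mul_of_nonneg_left (mul_le_mul_of_nonneg_left h3 (sq_nonneg b)) hC0
            _ = C * T ^ 2 * b ^ 2 := by ring
        rw [abs_mul]
        calc |k u| * |E u| ≤ |k u| * (C * T ^ 2 * b ^ 2) :=
              mul_le_mul_of_nonneg_left hE (abs_nonneg _)
          _ = (C * T ^ 2 * b ^ 2) * |k u| := mul_comm _ _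
      · simp only [hk_supp u h, zero_mul, abs_zero]
        positivity
    calc |∫ u, k u * E u| ≤ ∫ u, |k u * E u| := by
          have := norm_integral_le_integral_norm (μ := volume) (fun u : ℝ => k u * E u)
          simp only [Real.norm_eq_abs] at this
          exact this
      _ ≤ ∫ u, (C * T ^ 2 * b ^ 2) * |k u| :=
          integral_mono hIE.abs (hk_int.abs.const_mul _) (fun u => hpt u)
      _ = C * T ^ 2 * (∫ u, |k u|) * b ^ 2 := by rw [integral_const_mul]; ring
  -- Step 6: put everything together
  have hgr : g₀ r = (r ^ p)⁻¹ * φ r := by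
    have h1 : g₁ r = g₀ r := hg₁eq r (by linarith [hr.1])
    simp only [hφdef]
    rw [h1]
    field_simp
  rw [hstep1, hstep2, hstep3, hgr]
  have hfinal : (r ^ p)⁻¹ * (∫ u, k u * φ (r - b * u)) - (r ^ p)⁻¹ * φ r
      = (r ^ p)⁻¹ * ∫ u, k u * E u := by
    rw [← hstep4]; ring
  rw [hfinal, abs_mul, abs_of_pos (inv_pos.mpr hrp)]
  have hrpmin : (r ^ p)⁻¹ ≤ (rmin ^ p)⁻¹ := by
    apply inv_anti₀ (pow_pos h0 p)
    exact pow_le_pow_left₀ h0.le hr.1 p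
  have hknn : (0:ℝ) ≤ ∫ u, |k u| := integral_nonneg (fun u => abs_nonneg _)
  calc (r ^ p)⁻¹ * |∫ u, k u * E u|
      ≤ (rmin ^ p)⁻¹ * (C * T ^ 2 * (∫ u, |k u|) * b ^ 2) := by
        apply mul_le_mul hrpmin hbound (abs_nonneg _) (by positivity)
    _ = (rmin ^ p)⁻¹ * (C * T ^ 2 * ∫ u, |k u|) * b ^ 2 := by ring
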